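/- arXiv:2309.09977 — 2 statements merged into one kernel-verified Lean document; each statement's English description precedes it below -/
import Mathlib

section
/- Suppose ψ : ℝ^d → ℝ is differentiable and L-smooth with L > 0, and let (v^{s,q}) be the Markov chain coordinate descent iterates generated from an initial point v^{0,0} with step size η ∈ (0, 1/(LSQ)], block sequence k^0,…,k^{S−1}, and Q inner updates per block. Then for every s ∈ {0,…,S−1} and q ∈ {0,…,Q−1}, ‖∇_{k^s} ψ(v^{s,q}) − ∇_{k^s} ψ(v^{0,0})‖ ≤ C₁·‖∇ψ(v^{0,0})‖, where C₁ := η·e·L·S·Q and e is Euler's number. -/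
/-- For a block `k` (blocks given by the assignment `blk : Fin d → K` of coordinates
to blocks), the vector `∇̄_k ψ(v)` agreeing with the gradient of `ψ` at `v` on the
coordinates of block `k` and zero elsewhere.  Note `‖maskedGrad blk ψ v k‖ = ‖∇_k ψ(v)‖`. -/
noncomputable def maskedGrad {d : ℕ} {K : Type*} [DecidableEq K]
    (blk : Fin d → K) (ψ : EuclideanSpace ℝ (Fin d) → ℝ)
    (v : EuclideanSpace ℝ (Fin d)) (k : K) : EuclideanSpace ℝ (Fin d) :=
  WithLp.toLp 2 (fun i => if blk i = k then gradient ψ v i else 0)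

lemma euclid_norm_le_of_abs_le {d : ℕ} (x y : EuclideanSpace ℝ (Fin d))
    (h : ∀ i, |x i| ≤ |y i|) : ‖x‖ ≤ ‖y‖ := by
  rw [EuclideanSpace.norm_eq, EuclideanSpace.norm_eq]
  apply Real.sqrt_le_sqrt
  apply Finset.sum_le_sum
  intro i _
  simp only [Real.norm_eq_abs]
  exact pow_le_pow_left₀ (abs_nonneg _) (h i) 2

lemma maskedGrad_norm_le {d : ℕ} {K : Type*} [DecidableEq K]
    (blk : Fin d → K) (ψ : EuclideanSpace ℝ (Fin d) → ℝ)
    (u : EuclideanSpace ℝ (Fin d)) (k : K) :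
    ‖maskedGrad blk ψ u k‖ ≤ ‖gradient ψ u‖ := by
  apply euclid_norm_le_of_abs_le
  intro i
  simp only [maskedGrad, WithLp.ofLp_toLp]
  split <;> simp

lemma maskedGrad_sub_norm_le {d : ℕ} {K : Type*} [DecidableEq K]
    (blk : Fin d → K) (ψ : EuclideanSpace ℝ (Fin d) → ℝ)
    (u w : EuclideanSpace ℝ (Fin d)) (k : K) :
    ‖maskedGrad blk ψ u k - maskedGrad blk ψ w k‖ ≤ ‖gradient ψ u - gradient ψ w‖ := by
  apply euclid_norm_le_of_abs_le
  intro i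
  have h1 : (maskedGrad blk ψ u k - maskedGrad blk ψ w k) i
      = maskedGrad blk ψ u k i - maskedGrad blk ψ w k i := rfl
  have h2 : (gradient ψ u - gradient ψ w) i = gradient ψ u i - gradient ψ w i := rfl
  rw [h1, h2]
  simp only [maskedGrad, WithLp.ofLp_toLp]
  split <;> simp

/-- **Lemma 1 (surrogate offset bound).** For Markov chain coordinate descent iterates
`v^{s,q}` of an `L`-smooth differentiable `ψ` with step size `η ∈ (0, 1/(LSQ)]`,
for all `s < S` and `q < Q`,
`‖∇_{k^s} ψ(v^{s,q}) − ∇_{k^s} ψ(v^{0,0})‖ ≤ C₁ ‖∇ψ(v^{0,0})‖`, where `C₁ = η e L S Q`. -/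
theorem mccd_surrogate_offset_bound_C1
    {d : ℕ} (hd : 1 ≤ d) {K : Type*} [Fintype K] [DecidableEq K]
    (blk : Fin d → K)
    (ψ : EuclideanSpace ℝ (Fin d) → ℝ) (L : ℝ) (hL : 0 < L)
    (hdiff : Differentiable ℝ ψ)
    (hsmooth : ∀ x y : EuclideanSpace ℝ (Fin d),
      ‖gradient ψ x - gradient ψ y‖ ≤ L * ‖x - y‖)
    (S Q : ℕ) (hS : 1 ≤ S) (hQ : 1 ≤ Q)
    (η : ℝ) (hη : 0 < η) (hηub : η ≤ 1 / (L * S * Q))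
    (kseq : ℕ → K)
    (v : ℕ → ℕ → EuclideanSpace ℝ (Fin d))
    (hrecq : ∀ s < S, ∀ q < Q,
      v s (q + 1) = v s q - η • maskedGrad blk ψ (v s q) (kseq s))
    (hrecs : ∀ s < S, v (s + 1) 0 = v s Q)
    (C₁ : ℝ) (hC₁ : C₁ = η * Real.exp 1 * L * S * Q) :
    ∀ s < S, ∀ q < Q,
      ‖maskedGrad blk ψ (v s q) (kseq s) - maskedGrad blk ψ (v 0 0) (kseq s)‖
        ≤ C₁ * ‖gradient ψ (v 0 0)‖ := by
  set g : ℝ := ‖gradient ψ (v 0 0)‖ with hg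
  have hg0 : 0 ≤ g := norm_nonneg _
  have hηL : 0 ≤ η * L := le_of_lt (mul_pos hη hL)
  -- one step of the recursion
  have step : ∀ s < S, ∀ q < Q, ∀ t : ℕ,
      ‖gradient ψ (v s q) - gradient ψ (v 0 0)‖ ≤ ((1 + η * L) ^ t - 1) * g →
      ‖gradient ψ (v s (q + 1)) - gradient ψ (v 0 0)‖ ≤ ((1 + η * L) ^ (t + 1) - 1) * g := by
    intro s hs q hq t ih
    have hrec := hrecq s hs q hq
    have hmove : ‖v s (q + 1) - v s q‖ = η * ‖maskedGrad blk ψ (v s q) (kseq s)‖ := by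
      rw [hrec]
      rw [sub_sub_cancel_left, norm_neg, norm_smul, Real.norm_eq_abs, abs_of_pos hη]
    have hgq : ‖gradient ψ (v s q)‖ ≤ g + ((1 + η * L) ^ t - 1) * g := by
      calc ‖gradient ψ (v s q)‖
          ≤ ‖gradient ψ (v 0 0)‖ + ‖gradient ψ (v s q) - gradient ψ (v 0 0)‖ := by
            have := norm_add_le (gradient ψ (v 0 0)) (gradient ψ (v s q) - gradient ψ (v 0 0))
            simpa using this
        _ ≤ g + ((1 + η * L) ^ t - 1) * g := by exact add_le_add le_rfl ih
    have hdiffnorm : ‖gradient ψ (v s (q + 1)) - gradient ψ (v s q)‖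
        ≤ η * L * ((1 + η * L) ^ t * g) := by
      calc ‖gradient ψ (v s (q + 1)) - gradient ψ (v s q)‖
          ≤ L * ‖v s (q + 1) - v s q‖ := hsmooth _ _
        _ = L * η * ‖maskedGrad blk ψ (v s q) (kseq s)‖ := by rw [hmove]; ring
        _ ≤ L * η * ‖gradient ψ (v s q)‖ := by
            apply mul_le_mul_of_nonneg_left (maskedGrad_norm_le _ _ _ _)
            positivity
        _ ≤ L * η * (g + ((1 + η * L) ^ t - 1) * g) := by
            apply mul_le_mul_of_nonneg_left hgq; positivity
        _ = η * L * ((1 + η * L) ^ t * g) := by ring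
    calc ‖gradient ψ (v s (q + 1)) - gradient ψ (v 0 0)‖
        ≤ ‖gradient ψ (v s (q + 1)) - gradient ψ (v s q)‖
            + ‖gradient ψ (v s q) - gradient ψ (v 0 0)‖ := by
          have := norm_add_le (gradient ψ (v s (q + 1)) - gradient ψ (v s q))
            (gradient ψ (v s q) - gradient ψ (v 0 0))
          simpa using this
      _ ≤ η * L * ((1 + η * L) ^ t * g) + ((1 + η * L) ^ t - 1) * g := add_le_add hdiffnorm ih
      _ = ((1 + η * L) ^ (t + 1) - 1) * g := by ring
  -- the gradient offset bound by induction
  have main : ∀ s, s < S → ∀ q, q ≤ Q →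
      ‖gradient ψ (v s q) - gradient ψ (v 0 0)‖ ≤ ((1 + η * L) ^ (s * Q + q) - 1) * g := by
    intro s
    induction s with
    | zero =>
      intro hs q
      induction q with
      | zero => intro _; simp
      | succ q ihq =>
        intro hq
        exact step 0 hs q (by omega) (0 * Q + q) (ihq (by omega))
    | succ s ihs =>
      intro hs q
      have hsS : s < S := by omega
      have base : ‖gradient ψ (v (s + 1) 0) - gradient ψ (v 0 0)‖
          ≤ ((1 + η * L) ^ ((s + 1) * Q + 0) - 1) * g := by
        rw [hrecs s hsS]
        have h := ihs hsS Q le_rfl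
        have he : (s + 1) * Q + 0 = s * Q + Q := by ring
        rw [he]
        exact h
      induction q with
      | zero => intro _; exact base
      | succ q ihq =>
        intro hq
        exact step (s + 1) hs q (by omega) ((s + 1) * Q + q) (ihq (by omega))
  -- combine
  intro s hs q hq
  have h1 := main s hs q (le_of_lt hq)
  have h2 := maskedGrad_sub_norm_le blk ψ (v s q) (v 0 0) (kseq s)
  have hSQ : (0:ℝ) < (S : ℝ) * (Q : ℝ) := by
    have : (0:ℝ) < (S : ℝ) := by exact_mod_cast hS
    have : (0:ℝ) < (Q : ℝ) := by exact_mod_cast hQ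
    positivity
  have hden : (0:ℝ) < L * S * Q := by
    have h1 : (0:ℝ) < (S : ℝ) := by exact_mod_cast hS
    have h2 : (0:ℝ) < (Q : ℝ) := by exact_mod_cast hQ
    positivity
  have hx1 : η * L * ((S : ℝ) * Q) ≤ 1 := by
    have := (le_div_iff₀ hden).mp hηub
    nlinarith
  set x : ℝ := η * L * ((S : ℝ) * Q) with hxdef
  have hx0 : 0 ≤ x := by positivity
  -- exponent bound in ℕ
  have htle : s * Q + q ≤ S * Q := by
    have h3 : s + 1 ≤ S := hs
    calc s * Q + q ≤ s * Q + Q := by omega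
      _ = (s + 1) * Q := by ring
      _ ≤ S * Q := Nat.mul_le_mul_right Q h3
  have hpow1 : (1 + η * L) ^ (s * Q + q) ≤ (1 + η * L) ^ (S * Q) :=
    pow_le_pow_right₀ (by linarith) htle
  have hpow2 : (1 + η * L) ^ (S * Q) ≤ Real.exp (η * L) ^ (S * Q) :=
    pow_le_pow_left₀ (by linarith) (by linarith [Real.add_one_le_exp (η * L)]) _
  have hpow3 : Real.exp (η * L) ^ (S * Q) = Real.exp x := by
    rw [← Real.exp_nat_mul]
    congr 1
    push_cast [hxdef]
    ring
  have hexp : Real.exp x - 1 ≤ x * Real.exp 1 := by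
    have h4 : 1 - x ≤ Real.exp (-x) := by linarith [Real.add_one_le_exp (-x)]
    have h5 : Real.exp x ≤ Real.exp 1 := Real.exp_le_exp.mpr hx1
    have h6 : 0 < Real.exp x := Real.exp_pos x
    have h7 : Real.exp (-x) * Real.exp x = 1 := by
      rw [← Real.exp_add]; simp
    nlinarith
  have hfinal : ((1 + η * L) ^ (s * Q + q) - 1) * g ≤ C₁ * g := by
    have hC : C₁ = x * Real.exp 1 := by rw [hC₁, hxdef]; ring
    rw [hC]
    have : (1 + η * L) ^ (s * Q + q) - 1 ≤ x * Real.exp 1 := by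
      calc (1 + η * L) ^ (s * Q + q) - 1 ≤ Real.exp x - 1 := by
            rw [← hpow3]; linarith
        _ ≤ x * Real.exp 1 := hexp
    exact mul_le_mul_of_nonneg_right this hg0
  calc ‖maskedGrad blk ψ (v s q) (kseq s) - maskedGrad blk ψ (v 0 0) (kseq s)‖
      ≤ ‖gradient ψ (v s q) - gradient ψ (v 0 0)‖ := h2
    _ ≤ ((1 + η * L) ^ (s * Q + q) - 1) * g := h1
    _ ≤ C₁ * g := hfinal
end

section
/- Suppose ψ : ℝ^d → ℝ is differentiable and L-smooth with L > 0, and let (v^{s,q}) be the Markov chain coordinate descent iterates generated from an initial point v^{0,0} with step size η ∈ (0, 1/(LSQ)], block sequence k^0,…,k^{S−1}, and Q inner updates per block, with final iterate v^{S,0}. Then ((L+1)/2)·‖v^{S,0} − v^{0,0}‖² ≤ η²·(L+1)·S²·Q²·C₁²·‖∇ψ(v^{0,0})‖² + η²·(L+1)·S·Q·∑_{s=0}^{S−1} ∑_{q=0}^{Q−1} ‖∇_{k^s} ψ(v^{0,0})‖², where C₁ := η·e·L·S·Q. -/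
lemma mask_norm_le {d : ℕ} {K : Type*} [DecidableEq K] (blk : Fin d → K)
    (ψ : EuclideanSpace ℝ (Fin d) → ℝ) (x : EuclideanSpace ℝ (Fin d)) (k : K) :
    ‖maskedGrad blk ψ x k‖ ≤ ‖gradient ψ x‖ := by
  rw [EuclideanSpace.norm_eq, EuclideanSpace.norm_eq]
  apply Real.sqrt_le_sqrt
  apply Finset.sum_le_sum
  intro i _
  have : maskedGrad blk ψ x k i = if blk i = k then gradient ψ x i else 0 := rfl
  rw [this]
  by_cases h : blk i = k <;> [simp [h]; simp [h]] <;> positivity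

lemma mask_sub_norm_le {d : ℕ} {K : Type*} [DecidableEq K] (blk : Fin d → K)
    (ψ : EuclideanSpace ℝ (Fin d) → ℝ) (x y : EuclideanSpace ℝ (Fin d)) (k : K) :
    ‖maskedGrad blk ψ x k - maskedGrad blk ψ y k‖ ≤ ‖gradient ψ x - gradient ψ y‖ := by
  rw [EuclideanSpace.norm_eq, EuclideanSpace.norm_eq]
  apply Real.sqrt_le_sqrt
  apply Finset.sum_le_sum
  intro i _
  have h1 : (maskedGrad blk ψ x k - maskedGrad blk ψ y k) i
      = (if blk i = k then gradient ψ x i else 0)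
        - (if blk i = k then gradient ψ y i else 0) := rfl
  have h2 : (gradient ψ x - gradient ψ y) i = gradient ψ x i - gradient ψ y i := rfl
  rw [h1, h2]
  by_cases h : blk i = k <;> [simp [h]; simp [h]] <;> positivity

lemma rec_growth (T : ℕ) (r : ℕ → ℝ) (a c : ℝ) (ha : 1 ≤ a) (hc : 0 ≤ c) (h0 : r 0 = 0)
    (hrec : ∀ t < T, r (t + 1) ≤ a * r t + c) :
    ∀ t ≤ T, r t ≤ c * t * a ^ t := by
  intro t
  induction t with
  | zero => simp [h0]
  | succ t ih =>
    intro hle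
    have ihs := ih (by omega)
    have hlt : t < T := by omega
    have ha0 : (0:ℝ) ≤ a := le_trans zero_le_one ha
    have hA : (0:ℝ) ≤ a ^ t := pow_nonneg ha0 t
    have hca : c ≤ c * (a ^ t * a) := by
      calc c = c * 1 := by ring
      _ ≤ c * (a ^ t * a) := by
          apply mul_le_mul_of_nonneg_left _ hc
          calc (1:ℝ) = 1 * 1 := by ring
          _ ≤ a ^ t * a := mul_le_mul (one_le_pow₀ ha) ha zero_le_one hA
    calc r (t + 1) ≤ a * r t + c := hrec t hlt
      _ ≤ a * (c * t * a ^ t) + c := by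
          nlinarith [mul_le_mul_of_nonneg_left ihs ha0]
      _ ≤ c * t * (a ^ t * a) + c * (a ^ t * a) := by nlinarith
      _ = c * (t + 1 : ℕ) * a ^ (t + 1) := by rw [pow_succ]; push_cast; ring

lemma sum_div_reindex (S Q : ℕ) (hQ : 0 < Q) (f : ℕ → ℝ) :
    ∑ t ∈ Finset.range (S * Q), f (t / Q)
      = ∑ s ∈ Finset.range S, ∑ q ∈ Finset.range Q, f s := by
  induction S with
  | zero => simp
  | succ S ih =>
    rw [Finset.sum_range_succ, ← ih, Nat.succ_mul, Finset.sum_range_add]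
    congr 1
    apply Finset.sum_congr rfl
    intro j hj
    have : (S * Q + j) / Q = S := by
      rw [mul_comm, Nat.mul_add_div hQ, Nat.div_eq_of_lt (Finset.mem_range.1 hj), add_zero]
    rw [this]


set_option maxHeartbeats 1000000 in
/-- **Quadratic-term bound.** For Markov chain coordinate descent iterates of an `L`-smooth
differentiable `ψ` with step size `η ∈ (0, 1/(LSQ)]` and final iterate `v^{S,0}`,
`((L+1)/2)‖v^{S,0} − v⁰⁰‖² ≤ η²(L+1)S²Q²C₁²‖∇ψ(v⁰⁰)‖²
  + η²(L+1)SQ ∑_{s<S} ∑_{q<Q} ‖∇_{k^s}ψ(v⁰⁰)‖²`, where `C₁ = η e L S Q`. -/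
theorem mccd_quadratic_term_bound
    {d : ℕ} (hd : 1 ≤ d) {K : Type*} [Fintype K] [DecidableEq K]
    (blk : Fin d → K)
    (ψ : EuclideanSpace ℝ (Fin d) → ℝ) (L : ℝ) (hL : 0 < L)
    (hdiff : Differentiable ℝ ψ)
    (hsmooth : ∀ x y : EuclideanSpace ℝ (Fin d),
      ‖gradient ψ x - gradient ψ y‖ ≤ L * ‖x - y‖)
    (S Q : ℕ) (hS : 1 ≤ S) (hQ : 1 ≤ Q)
    (η : ℝ) (hη : 0 < η) (hηub : η ≤ 1 / (L * S * Q))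
    (kseq : ℕ → K)
    (v : ℕ → ℕ → EuclideanSpace ℝ (Fin d))
    (hrecq : ∀ s < S, ∀ q < Q,
      v s (q + 1) = v s q - η • maskedGrad blk ψ (v s q) (kseq s))
    (hrecs : ∀ s < S, v (s + 1) 0 = v s Q)
    (C₁ : ℝ) (hC₁ : C₁ = η * Real.exp 1 * L * S * Q) :
    (L + 1) / 2 * ‖v S 0 - v 0 0‖ ^ 2
      ≤ η ^ 2 * (L + 1) * S ^ 2 * Q ^ 2 * C₁ ^ 2 * ‖gradient ψ (v 0 0)‖ ^ 2
        + η ^ 2 * (L + 1) * S * Q * ∑ s ∈ Finset.range S, ∑ q ∈ Finset.range Q,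
            ‖maskedGrad blk ψ (v 0 0) (kseq s)‖ ^ 2 := by
  have hQ0 : 0 < Q := hQ
  set w : ℕ → EuclideanSpace ℝ (Fin d) := fun t => v (t / Q) (t % Q) with hw
  -- flattened recursion
  have hstep : ∀ t < S * Q,
      w (t + 1) = w t - η • maskedGrad blk ψ (w t) (kseq (t / Q)) := by
    intro t ht
    have hs : t / Q < S := (Nat.div_lt_iff_lt_mul hQ0).2 ht
    have hq : t % Q < Q := Nat.mod_lt _ hQ0
    by_cases hcase : t % Q + 1 < Q
    · have e1 : t + 1 = Q * (t / Q) + (t % Q + 1) := by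
        conv_lhs => rw [← Nat.div_add_mod t Q]
        rw [add_assoc]
      have hdiv : (t + 1) / Q = t / Q := by
        rw [e1, Nat.mul_add_div hQ0, Nat.div_eq_of_lt hcase, add_zero]
      have hmod : (t + 1) % Q = t % Q + 1 := by
        rw [e1, Nat.mul_add_mod, Nat.mod_eq_of_lt hcase]
      show v ((t+1)/Q) ((t+1)%Q) = _
      rw [hdiv, hmod]
      exact hrecq _ hs _ hq
    · have hQeq : t % Q + 1 = Q := by omega
      have e1 : t + 1 = Q * (t / Q + 1) := by
        rw [Nat.mul_succ]
        conv_lhs => rw [← Nat.div_add_mod t Q]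
        rw [add_assoc, hQeq]
      have hdiv : (t + 1) / Q = t / Q + 1 := by
        rw [e1, Nat.mul_div_cancel_left _ hQ0]
      have hmod : (t + 1) % Q = 0 := by rw [e1, Nat.mul_mod_right]
      show v ((t+1)/Q) ((t+1)%Q) = _
      rw [hdiv, hmod, hrecs _ hs]
      have h := hrecq _ hs _ hq
      rw [hQeq] at h
      exact h
  have hw0 : w 0 = v 0 0 := by simp [hw]
  have hwSQ : w (S * Q) = v S 0 := by
    show v (S * Q / Q) (S * Q % Q) = v S 0
    rw [Nat.mul_div_cancel _ hQ0, Nat.mul_mod_left]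
  -- main analytic argument
  set G := ‖gradient ψ (v 0 0)‖ with hGdef
  have hG : 0 ≤ G := norm_nonneg _
  set r : ℕ → ℝ := fun t => ‖w t - w 0‖ with hr
  have hr0 : r 0 = 0 := by simp [hr]
  have hgradb : ∀ t, ‖gradient ψ (w t)‖ ≤ G + L * r t := by
    intro t
    calc ‖gradient ψ (w t)‖
        = ‖gradient ψ (w 0) + (gradient ψ (w t) - gradient ψ (w 0))‖ := by
          congr 1; abel
      _ ≤ ‖gradient ψ (w 0)‖ + ‖gradient ψ (w t) - gradient ψ (w 0)‖ := norm_add_le _ _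
      _ ≤ G + L * r t := by
          rw [hGdef, ← hw0]
          exact add_le_add le_rfl (hsmooth (w t) (w 0))
  have hrrec : ∀ t < S * Q, r (t + 1) ≤ (1 + η * L) * r t + η * G := by
    intro t ht
    have : w (t + 1) - w 0 = (w t - w 0) - η • maskedGrad blk ψ (w t) (kseq (t / Q)) := by
      rw [hstep t ht]; abel
    calc r (t + 1) = ‖(w t - w 0) - η • maskedGrad blk ψ (w t) (kseq (t / Q))‖ := by
          show ‖w (t + 1) - w 0‖ = _
          rw [this]
      _ ≤ ‖w t - w 0‖ + ‖η • maskedGrad blk ψ (w t) (kseq (t / Q))‖ := norm_sub_le _ _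
      _ = r t + η * ‖maskedGrad blk ψ (w t) (kseq (t / Q))‖ := by
          rw [norm_smul, Real.norm_eq_abs, abs_of_pos hη]
      _ ≤ r t + η * (G + L * r t) := by
          have h1 := (mask_norm_le blk ψ (w t) (kseq (t / Q))).trans (hgradb t)
          nlinarith
      _ = (1 + η * L) * r t + η * G := by ring
  have ha1 : (1:ℝ) ≤ 1 + η * L := by nlinarith
  have hc0 : (0:ℝ) ≤ η * G := by positivity
  have hgrow := rec_growth (S * Q) r (1 + η * L) (η * G) ha1 hc0 hr0 hrrec
  have hS0 : (0:ℝ) < (S:ℝ) := by exact_mod_cast hS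
  have hQ0' : (0:ℝ) < (Q:ℝ) := by exact_mod_cast hQ
  have hLSQ : (0:ℝ) < L * S * Q := by positivity
  have hη1 : η * L * (S * Q : ℝ) ≤ 1 := by
    have := (le_div_iff₀ hLSQ).mp hηub
    nlinarith
  have hexp : (1 + η * L) ^ (S * Q) ≤ Real.exp 1 := by
    have h1 : (1 + η * L) ≤ Real.exp (η * L) := by
      have := Real.add_one_le_exp (η * L); linarith
    calc (1 + η * L) ^ (S * Q) ≤ Real.exp (η * L) ^ (S * Q) := by
          apply pow_le_pow_left₀ (by positivity) h1
      _ = Real.exp ((S * Q : ℕ) * (η * L)) := (Real.exp_nat_mul _ _).symm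
      _ ≤ Real.exp 1 := by
          apply Real.exp_le_exp.mpr
          push_cast
          nlinarith
  have hrb : ∀ t ≤ S * Q, r t ≤ η * G * (S * Q : ℕ) * Real.exp 1 := by
    intro t ht
    have h1 := hgrow t ht
    have h2 : η * G * (t : ℝ) * (1 + η * L) ^ t ≤ η * G * (S * Q : ℕ) * (1 + η * L) ^ (S * Q) := by
      apply mul_le_mul
      · apply mul_le_mul_of_nonneg_left _ (by positivity)
        exact_mod_cast ht
      · exact pow_le_pow_right₀ (by nlinarith) ht
      · positivity
      · positivity
    have h3 : η * G * (S * Q : ℕ) * (1 + η * L) ^ (S * Q) ≤ η * G * (S * Q : ℕ) * Real.exp 1 :=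
      mul_le_mul_of_nonneg_left hexp (by positivity)
    linarith
  -- norm bound on the displacement
  set A : ℝ := ∑ t ∈ Finset.range (S * Q), ‖maskedGrad blk ψ (v 0 0) (kseq (t / Q))‖ with hA
  set R : ℝ := η * G * (S * Q : ℕ) * Real.exp 1 with hR
  have hmt : ∀ t < S * Q, ‖maskedGrad blk ψ (w t) (kseq (t / Q))‖
      ≤ ‖maskedGrad blk ψ (v 0 0) (kseq (t / Q))‖ + L * R := by
    intro t ht
    calc ‖maskedGrad blk ψ (w t) (kseq (t / Q))‖
        = ‖maskedGrad blk ψ (v 0 0) (kseq (t / Q))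
            + (maskedGrad blk ψ (w t) (kseq (t / Q)) - maskedGrad blk ψ (v 0 0) (kseq (t / Q)))‖ := by
          congr 1; abel
      _ ≤ ‖maskedGrad blk ψ (v 0 0) (kseq (t / Q))‖
            + ‖maskedGrad blk ψ (w t) (kseq (t / Q)) - maskedGrad blk ψ (v 0 0) (kseq (t / Q))‖ :=
          norm_add_le _ _
      _ ≤ ‖maskedGrad blk ψ (v 0 0) (kseq (t / Q))‖ + L * R := by
          apply add_le_add le_rfl
          calc ‖maskedGrad blk ψ (w t) (kseq (t / Q)) - maskedGrad blk ψ (v 0 0) (kseq (t / Q))‖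
              ≤ ‖gradient ψ (w t) - gradient ψ (v 0 0)‖ := mask_sub_norm_le blk ψ _ _ _
            _ ≤ L * ‖w t - v 0 0‖ := hsmooth _ _
            _ ≤ L * R := by
                apply mul_le_mul_of_nonneg_left _ hL.le
                have := hrb t ht.le
                rw [hr] at this
                simp only [hw0] at this
                exact this
  have hdisp : ‖v S 0 - v 0 0‖ ≤ η * A + η * (S * Q : ℕ) * (L * R) := by
    have htel : v S 0 - v 0 0 = ∑ t ∈ Finset.range (S * Q), (w (t + 1) - w t) := by
      rw [Finset.sum_range_sub w (S * Q), hwSQ, hw0]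
    calc ‖v S 0 - v 0 0‖ = ‖∑ t ∈ Finset.range (S * Q), (w (t + 1) - w t)‖ := by rw [htel]
      _ ≤ ∑ t ∈ Finset.range (S * Q), ‖w (t + 1) - w t‖ := norm_sum_le _ _
      _ ≤ ∑ t ∈ Finset.range (S * Q),
            (η * ‖maskedGrad blk ψ (v 0 0) (kseq (t / Q))‖ + η * (L * R)) := by
          apply Finset.sum_le_sum
          intro t ht
          have ht' := Finset.mem_range.1 ht
          rw [hstep t ht']
          have : w t - η • maskedGrad blk ψ (w t) (kseq (t / Q)) - w t
              = -(η • maskedGrad blk ψ (w t) (kseq (t / Q))) := by abel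
          rw [this, norm_neg, norm_smul, Real.norm_eq_abs, abs_of_pos hη]
          have := hmt t ht'
          nlinarith
      _ = η * A + η * (S * Q : ℕ) * (L * R) := by
          rw [Finset.sum_add_distrib, ← Finset.mul_sum, Finset.sum_const, Finset.card_range,
            nsmul_eq_mul]
          ring
  set B : ℝ := ∑ s ∈ Finset.range S, ∑ q ∈ Finset.range Q,
      ‖maskedGrad blk ψ (v 0 0) (kseq s)‖ ^ 2 with hB
  have hsum : ∑ t ∈ Finset.range (S * Q), ‖maskedGrad blk ψ (v 0 0) (kseq (t / Q))‖ ^ 2 = B :=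
    sum_div_reindex S Q hQ0 (fun s => ‖maskedGrad blk ψ (v 0 0) (kseq s)‖ ^ 2)
  have hA2 : A ^ 2 ≤ (S : ℝ) * (Q : ℝ) * B := by
    rw [hA, ← hsum]
    have := sq_sum_le_card_mul_sum_sq (s := Finset.range (S * Q))
      (f := fun t => ‖maskedGrad blk ψ (v 0 0) (kseq (t / Q))‖)
    simpa [Finset.card_range, Nat.cast_mul, mul_assoc] using this
  have hLp : (0:ℝ) ≤ (L + 1) / 2 := by linarith
  have h1 : ‖v S 0 - v 0 0‖ ^ 2 ≤ (η * A + η * (S * Q : ℕ) * (L * R)) ^ 2 :=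
    pow_le_pow_left₀ (norm_nonneg _) hdisp 2
  have h2 : (η * A + η * (S * Q : ℕ) * (L * R)) ^ 2
      ≤ 2 * (η * A) ^ 2 + 2 * (η * (S * Q : ℕ) * (L * R)) ^ 2 := by
    nlinarith [sq_nonneg (η * A - η * (S * Q : ℕ) * (L * R))]
  have h3 : (η * A) ^ 2 ≤ η ^ 2 * ((S : ℝ) * (Q : ℝ) * B) := by
    rw [mul_pow]
    exact mul_le_mul_of_nonneg_left hA2 (sq_nonneg η)
  have h4 : (η * (S * Q : ℕ) * (L * R)) ^ 2
      = η ^ 2 * (S : ℝ) ^ 2 * (Q : ℝ) ^ 2 * C₁ ^ 2 * G ^ 2 := by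
    rw [hR, hC₁]; push_cast; ring
  have key : ‖v S 0 - v 0 0‖ ^ 2
      ≤ 2 * (η ^ 2 * (S : ℝ) ^ 2 * (Q : ℝ) ^ 2 * C₁ ^ 2 * G ^ 2)
        + 2 * (η ^ 2 * ((S : ℝ) * (Q : ℝ) * B)) := by
    rw [← h4]; linarith
  have hfin := mul_le_mul_of_nonneg_left key hLp
  calc (L + 1) / 2 * ‖v S 0 - v 0 0‖ ^ 2
      ≤ (L + 1) / 2 * (2 * (η ^ 2 * (S : ℝ) ^ 2 * (Q : ℝ) ^ 2 * C₁ ^ 2 * G ^ 2)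
        + 2 * (η ^ 2 * ((S : ℝ) * (Q : ℝ) * B))) := hfin
    _ = η ^ 2 * (L + 1) * (S : ℝ) ^ 2 * (Q : ℝ) ^ 2 * C₁ ^ 2 * G ^ 2
        + η ^ 2 * (L + 1) * (S : ℝ) * (Q : ℝ) * B := by ring
end
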